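/- Let (M,d) be an ultrametric space. If x, y ∈ M, r, s ≥ 0, the closed ball B₁ = closedBall x r is contained in the closed ball B₂ = closedBall y s, and B₁ ≠ B₂, then the diameter of B₁ is strictly smaller than the diameter of B₂: Metric.diam B₁ < Metric.diam B₂. (In particular, in an ultrametric space every nonempty closed ball B equals the closed ball of radius diam B centered at any of its points.) -/
import Mathlib

/-- In an ultrametric space, the diameter is strictly monotone on the poset of
closed balls (of nonnegative radii). -/
theorem stmt10 (M : Type*) [MetricSpace M]
    (hu : ∀ x y z : M, dist x z ≤ max (dist x y) (dist y z))
    (x y : M) (r s : ℝ) (hr : 0 ≤ r) (hs : 0 ≤ s)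
    (hsub : Metric.closedBall x r ⊆ Metric.closedBall y s)
    (hne : Metric.closedBall x r ≠ Metric.closedBall y s) :
    Metric.diam (Metric.closedBall x r) < Metric.diam (Metric.closedBall y s) := by
  obtain ⟨z, hz2, hz1⟩ := Set.exists_of_ssubset (hsub.ssubset_of_ne hne)
  have hd1 : Metric.diam (Metric.closedBall x r) ≤ r := by
    apply Metric.diam_le_of_forall_dist_le hr
    intro p hp q hq
    exact (hu p x q).trans (max_le hp (Metric.mem_closedBall'.mp hq))
  have hxz : r < dist x z := by
    by_contra h
    exact hz1 (by simpa [Metric.mem_closedBall, dist_comm] using not_lt.mp h)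
  have hx2 : x ∈ Metric.closedBall y s := hsub (Metric.mem_closedBall_self hr)
  have : dist x z ≤ Metric.diam (Metric.closedBall y s) :=
    Metric.dist_le_diam_of_mem Metric.isBounded_closedBall hx2 hz2
  linarith
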